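/- Let Σ = {a, b} with the three-letter order a < ♯ < b, where ♯ ∉ Σ. A permutation π ∈ S_{n+1} is the suffix array of a word w♯ with w ∈ {a,b}ⁿ (suffixes compared with respect to the order a < ♯ < b) if and only if Des(Φ(π)) ⊆ {π⁻¹(n+1) − 1, π⁻¹(n+1)}. -/

import Mathlib

/-- Cyclic addition of the constant `k` to all values of a permutation of
`{1, …, n}` (identifying positions/values with `Fin n`, 1-based position `i`
corresponding to `i - 1 : Fin n`): `(addConst π k) i = π i + k (mod n)`. -/
def addConst {n : ℕ} (π : Equiv.Perm (Fin n)) (k : ℕ) : Equiv.Perm (Fin n) :=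
  π.trans (finRotate n ^ k)

/-- The linking permutation `Φ(π) = π⁻¹ ∘ (π + 1)`, i.e.
`Φ(π) i = π⁻¹ (π i + 1)` with cyclic value addition (`n + 1 ≡ 1`). -/
def linkPerm {n : ℕ} (π : Equiv.Perm (Fin n)) : Equiv.Perm (Fin n) :=
  (π.trans (finRotate n)).trans π.symm

/-- A permutation has exactly one orbit: iterating it reaches any element from
any element. -/
def OneOrbit {n : ℕ} (φ : Equiv.Perm (Fin n)) : Prop :=
  ∀ x y : Fin n, ∃ m : ℕ, (φ ^ m) x = y

/-- The descent set of a permutation of `{1, …, n}`, as a set of 1-based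
positions: `i ∈ [1, n-1]` is a descent iff `φ(i) > φ(i+1)`.  The 1-based
position `i` corresponds to the element `i - 1 : Fin n`. -/
def desSet {n : ℕ} (φ : Equiv.Perm (Fin n)) : Set ℕ :=
  {i : ℕ | ∃ h : i < n, 1 ≤ i ∧
    φ ⟨i, h⟩ < φ ⟨i - 1, Nat.lt_of_le_of_lt (Nat.sub_le i 1) h⟩}

/-- `π` is the suffix array of the word `w` of length `n`: `π i` is the
(0-based) starting position of the `i`-th smallest suffix of `w` in the
lexicographic order on lists (a proper prefix precedes its extensions). -/
def IsSuffixArray {α : Type*} [LinearOrder α] {n : ℕ} (w : List α)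
    (π : Equiv.Perm (Fin n)) : Prop :=
  w.length = n ∧ ∀ i j : Fin n, i < j → w.drop (π i : ℕ) < w.drop (π j : ℕ)

/-- `π` is the Burrows–Wheeler array of the word `w` of length `n`: `π i` is
the (0-based) starting position of the `i`-th smallest cyclic shift of `w`. -/
def IsBWArray {α : Type*} [LinearOrder α] {n : ℕ} (w : List α)
    (π : Equiv.Perm (Fin n)) : Prop :=
  w.length = n ∧ ∀ i j : Fin n, i < j → w.rotate (π i : ℕ) < w.rotate (π j : ℕ)

/-- A word is primitive iff it is not a proper power of another word:
`w = v^k` implies `k = 1`. -/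
def Primitive {α : Type*} (w : List α) : Prop :=
  ∀ (v : List α) (k : ℕ), w = (List.replicate k v).flatten → k = 1

/-- From `σ ∈ S_n`, the permutation `π' = (n+1) σ(1) ⋯ σ(n) ∈ S_{n+1}`:
position `1` (element `0 : Fin (n+1)`) is sent to the value `n + 1`
(element `Fin.last n`), and position `i + 1` is sent to the value `σ(i)`. -/
def appendMax {n : ℕ} (σ : Equiv.Perm (Fin n)) : Equiv.Perm (Fin (n + 1)) :=
  ((finSuccEquiv n).trans σ.optionCongr).trans (finSuccEquiv' (Fin.last n)).symm

/-- Binomial coefficient with integer arguments, which is `0` when the lower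
index is negative or exceeds the upper index. -/
def intChoose (m r : ℤ) : ℕ :=
  if 0 ≤ r ∧ r ≤ m then m.toNat.choose r.toNat else 0

/-- `π ∈ S_{n+1}` is ascending-to-max.  Values are 1-based: the value
`i ∈ [1, n-1]` corresponds to `x.castSucc` where `x : Fin n` satisfies
`(x : ℕ) + 1 = i` … i.e. `x = i - 1`; the value `i + 1` corresponds to
`x.succ`, and the value `n + 1` corresponds to `Fin.last n`. -/
def AscendingToMax {n : ℕ} (π : Equiv.Perm (Fin (n + 1))) : Prop :=
  ∀ x : Fin n, (x : ℕ) + 1 < n →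
    (π.symm x.castSucc < π.symm (Fin.last n) →
      π.symm x.succ < π.symm (Fin.last n) →
      π.symm x.castSucc < π.symm x.succ) ∧
    (π.symm (Fin.last n) < π.symm x.castSucc →
      π.symm (Fin.last n) < π.symm x.succ →
      π.symm x.succ < π.symm x.castSucc)

/-- `π ∈ S_{n+1}` is non-nesting.  Values are 1-based: the values `i, j ∈ [1, n]`
correspond to `x.castSucc, y.castSucc` with `x, y : Fin n`, and the values
`i + 1, j + 1` to `x.succ, y.succ`. -/
def NonNesting {n : ℕ} (π : Equiv.Perm (Fin (n + 1))) : Prop :=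
  ∀ x y : Fin n, π.symm x.castSucc < π.symm y.castSucc →
    ((π.symm x.castSucc < π.symm x.succ ∧ π.symm y.castSucc < π.symm y.succ) ∨
      (π.symm x.succ < π.symm x.castSucc ∧ π.symm y.succ < π.symm y.castSucc)) →
    π.symm x.succ < π.symm y.succ

section AuxSA13

variable {β : Type*} [LinearOrder β]

private lemma consLtCons13 {c d : β} {t1 t2 : List β} :
    (c :: t1 : List β) < (d :: t2) ↔ c < d ∨ (c = d ∧ t1 < t2) := by
  constructor
  · intro h
    have h' : List.Lex (· < ·) (c :: t1) (d :: t2) := h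
    cases h' with
    | rel h => exact Or.inl h
    | cons h => exact Or.inr ⟨rfl, h⟩
  · rintro (h | ⟨rfl, h⟩)
    · exact List.Lex.rel h
    · exact List.Lex.cons h

private lemma notLtNil13 (l : List β) : ¬ l < ([] : List β) :=
  fun h => by cases h

private lemma linkPerm_apply13 {n : ℕ} (π : Equiv.Perm (Fin (n + 1))) (r : Fin (n + 1)) :
    linkPerm π r = π.symm (π r + 1) := by
  simp [linkPerm, finRotate_succ_apply]

end AuxSA13

/-- Let `Σ = {a, b}` with sentinel order `a < ♯ < b`.
A permutation `π ∈ S_{n+1}` is the suffix array of a word `w♯` with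
`w ∈ {a, b}ⁿ` iff `Des(Φ(π)) ⊆ {π⁻¹(n+1) - 1, π⁻¹(n+1)}` (in 1-based terms,
`π⁻¹(n+1) - 1 = (π.symm (Fin.last n) : ℕ)`). -/
theorem isSuffixArray_midSentinel_iff_desSet {β : Type*} [LinearOrder β]
    (a s b : β) (has : a < s) (hsb : s < b) {n : ℕ}
    (π : Equiv.Perm (Fin (n + 1))) :
    (∃ w : List β, w.length = n ∧ (∀ c ∈ w, c = a ∨ c = b) ∧
        IsSuffixArray (w ++ [s]) π) ↔
      desSet (linkPerm π) ⊆
        {((π.symm (Fin.last n) : Fin (n + 1)) : ℕ),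
          ((π.symm (Fin.last n) : Fin (n + 1)) : ℕ) + 1} := by
  
  constructor
  · -- forward direction
    rintro ⟨w, hw, hab, hu, hsort⟩
    set u : List β := w ++ [s] with hudef
    set p : Fin (n + 1) := π.symm (Fin.last n) with hpdef
    have hpp : π p = Fin.last n := π.apply_symm_apply _
    have hulen : u.length = n + 1 := hu
    have hdropn : u.drop n = [s] := by
      rw [hudef, ← hw, List.drop_left]
    have hSp : u.drop ((π p : Fin (n+1)) : ℕ) = [s] := by
      rw [hpp]; simpa using hdropn
    -- suffixes starting before the sentinel
    have hlt : ∀ r : Fin (n + 1), r ≠ p → ((π r : ℕ) < n) := by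
      intro r hr
      have : π r ≠ Fin.last n := by
        intro h; exact hr (by rw [← hpp] at h; exact π.injective h)
      exact Fin.val_lt_last this
    have hcons : ∀ r : Fin (n + 1), (hr : r ≠ p) →
        u.drop (π r : ℕ) = u[(π r : ℕ)]'(by rw [hulen]; omega) ::
          u.drop ((π r : ℕ) + 1) := by
      intro r hr
      exact List.drop_eq_getElem_cons (by rw [hulen]; have := hlt r hr; omega)
    have hmemab : ∀ r : Fin (n + 1), (hr : r ≠ p) →
        u[(π r : ℕ)]'(by rw [hulen]; have := hlt r hr; omega) = a ∨
        u[(π r : ℕ)]'(by rw [hulen]; have := hlt r hr; omega) = b := by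
      intro r hr
      have h1 : (π r : ℕ) < w.length := by rw [hw]; exact hlt r hr
      have : u[(π r : ℕ)]'(by rw [hulen]; have := hlt r hr; omega)
          = w[(π r : ℕ)]'h1 := List.getElem_append_left h1
      rw [this]
      exact hab _ (List.getElem_mem h1)
    have hheada : ∀ r : Fin (n + 1), (hr : r ≠ p) → r < p →
        u.drop (π r : ℕ) = a :: u.drop ((π r : ℕ) + 1) := by
      intro r hr hrp
      rw [hcons r hr]
      congr 1
      have hS : u.drop (π r : ℕ) < [s] := by
        have := hsort r p hrp; rwa [hSp] at this
      rw [hcons r hr] at hS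
      rcases (consLtCons13.1 hS) with h | ⟨h1, h2⟩
      · rcases hmemab r hr with h' | h'
        · exact h'
        · rw [h'] at h; exact absurd h (lt_asymm hsb)
      · exact absurd h2 (notLtNil13 _)
    have hheadb : ∀ r : Fin (n + 1), (hr : r ≠ p) → p < r →
        u.drop (π r : ℕ) = b :: u.drop ((π r : ℕ) + 1) := by
      intro r hr hrp
      rw [hcons r hr]
      congr 1
      have hS : [s] < u.drop (π r : ℕ) := by
        have := hsort p r hrp; rwa [hSp] at this
      rw [hcons r hr] at hS
      rcases (consLtCons13.1 hS) with h | ⟨h1, h2⟩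
      · rcases hmemab r hr with h' | h'
        · rw [h'] at h; exact absurd h (lt_asymm has)
        · exact h'
      · exfalso
        rcases hmemab r hr with h' | h'
        · rw [h'] at h1; exact has.ne' h1
        · rw [h'] at h1; exact hsb.ne h1
    -- tail of a non-sentinel suffix
    have htail : ∀ r : Fin (n + 1), (hr : r ≠ p) →
        u.drop ((π (linkPerm π r) : ℕ)) = u.drop ((π r : ℕ) + 1) := by
      intro r hr
      have h1 : π (linkPerm π r) = π r + 1 := by
        rw [linkPerm_apply13]; exact π.apply_symm_apply _
      have h2 : ((π r + 1 : Fin (n+1)) : ℕ) = (π r : ℕ) + 1 :=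
        Fin.val_add_one_of_lt (by rw [Fin.lt_def, Fin.val_last]; exact hlt r hr)
      rw [h1, h2]
    -- main argument
    intro i hi
    obtain ⟨hin, hi1, hdes⟩ := hi
    by_contra hmem
    simp only [Set.mem_insert_iff, Set.mem_singleton_iff, not_or] at hmem
    obtain ⟨hne1, hne2⟩ := hmem
    set r0 : Fin (n + 1) := ⟨i - 1, by omega⟩ with hr0
    set r1 : Fin (n + 1) := ⟨i, hin⟩ with hr1
    have hr01 : r0 < r1 := by
      have h : (i - 1 : ℕ) < i := by omega
      exact h
    have hr0p : r0 ≠ p := by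
      intro h; apply hne2
      have := congrArg Fin.val h; simp [hr0] at this; omega
    have hr1p : r1 ≠ p := by
      intro h; apply hne1
      have := congrArg Fin.val h; simp [hr1] at this; omega
    -- both on the same side of p
    have hside : (r0 < p ∧ r1 < p) ∨ (p < r0 ∧ p < r1) := by
      rcases lt_or_gt_of_ne hr0p with h0 | h0 <;>
        rcases lt_or_gt_of_ne hr1p with h1 | h1
      · exact Or.inl ⟨h0, h1⟩
      · exfalso
        have h0' : (i - 1 : ℕ) < (p : ℕ) := h0
        have h1' : (p : ℕ) < i := h1
        omega
      · exact absurd (h1.trans h0) (lt_asymm hr01)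
      · exact Or.inr ⟨h0, h1⟩
    have hS01 : u.drop (π r0 : ℕ) < u.drop (π r1 : ℕ) := hsort r0 r1 hr01
    have hfin : ¬ u.drop ((π r0 : ℕ) + 1) < u.drop ((π r1 : ℕ) + 1) := by
      intro h2
      rw [← htail r0 hr0p, ← htail r1 hr1p] at h2
      have hdes' : linkPerm π r1 < linkPerm π r0 := hdes
      have := hsort _ _ hdes'
      exact absurd h2 (lt_asymm this)
    rcases hside with ⟨h0, h1⟩ | ⟨h0, h1⟩
    · rw [hheada r0 hr0p h0, hheada r1 hr1p h1] at hS01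
      rcases consLtCons13.1 hS01 with h | ⟨-, h2⟩
      · exact lt_irrefl _ h
      · exact hfin h2
    · rw [hheadb r0 hr0p h0, hheadb r1 hr1p h1] at hS01
      rcases consLtCons13.1 hS01 with h | ⟨-, h2⟩
      · exact lt_irrefl _ h
      · exact hfin h2
  · -- backward direction
    intro hdes
    set p : Fin (n + 1) := π.symm (Fin.last n) with hpdef
    have hpp : π p = Fin.last n := π.apply_symm_apply _
    set w : List β := List.ofFn (fun k : Fin n =>
      if π.symm k.castSucc < p then a else b) with hwdef
    have hw : w.length = n := by simp [hwdef]
    refine ⟨w, hw, ?_, ?_⟩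
    · intro c hc
      rw [hwdef, List.mem_ofFn] at hc
      obtain ⟨k, hk⟩ := hc
      split at hk
      · exact Or.inl hk.symm
      · exact Or.inr hk.symm
    set u : List β := w ++ [s] with hudef
    have hulen : u.length = n + 1 := by simp [hudef, hw]
    refine ⟨hulen, ?_⟩
    have hdropn : u.drop n = [s] := by rw [hudef, ← hw, List.drop_left]
    have hlt : ∀ r : Fin (n + 1), r ≠ p → ((π r : ℕ) < n) := by
      intro r hr
      have : π r ≠ Fin.last n := by
        intro h; exact hr (by rw [← hpp] at h; exact π.injective h)
      exact Fin.val_lt_last this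
    have hcons : ∀ r : Fin (n + 1), (hr : r ≠ p) →
        u.drop (π r : ℕ) = (if r < p then a else b) :: u.drop ((π r : ℕ) + 1) := by
      intro r hr
      have h0 : (π r : ℕ) < u.length := by rw [hulen]; have := hlt r hr; omega
      rw [List.drop_eq_getElem_cons h0]
      congr 1
      have h1 : (π r : ℕ) < w.length := by rw [hw]; exact hlt r hr
      have h2 : u[(π r : ℕ)]'h0 = w[(π r : ℕ)]'h1 := List.getElem_append_left h1
      have h1' : (π r : ℕ) < n := by rw [hw] at h1; exact h1
      have h3 : w[(π r : ℕ)]'h1 =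
          if π.symm ((⟨(π r : ℕ), h1'⟩ : Fin n).castSucc) < p then a else b := by
        simp [hwdef]
      have h4 : (⟨(π r : ℕ), h1'⟩ : Fin n).castSucc = π r := by ext; simp
      rw [h2, h3, h4, π.symm_apply_apply]
    have htail : ∀ r : Fin (n + 1), (hr : r ≠ p) →
        u.drop ((π (linkPerm π r) : ℕ)) = u.drop ((π r : ℕ) + 1) := by
      intro r hr
      have h1 : π (linkPerm π r) = π r + 1 := by
        rw [linkPerm_apply13]; exact π.apply_symm_apply _
      have h2 : ((π r + 1 : Fin (n+1)) : ℕ) = (π r : ℕ) + 1 :=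
        Fin.val_add_one_of_lt (by rw [Fin.lt_def, Fin.val_last]; exact hlt r hr)
      rw [h1, h2]
    -- monotonicity steps from the descent condition
    have hstep : ∀ i : ℕ, (h : i < n + 1) → 1 ≤ i → i ≠ (p : ℕ) → i ≠ (p : ℕ) + 1 →
        linkPerm π ⟨i - 1, by omega⟩ < linkPerm π ⟨i, h⟩ := by
      intro i h h1 hp1 hp2
      have hni : i ∉ desSet (linkPerm π) := by
        intro hmem
        have h' := hdes hmem
        simp only [Set.mem_insert_iff, Set.mem_singleton_iff] at h'
        omega
      have : ¬ (linkPerm π ⟨i, h⟩ < linkPerm π ⟨i - 1, by omega⟩) := by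
        intro hc; exact hni ⟨h, h1, hc⟩
      rcases lt_or_eq_of_le (le_of_not_gt this) with h' | h'
      · exact h'
      · exfalso
        have := (linkPerm π).injective h'
        have := congrArg Fin.val this; simp at this; omega
    have hchain : ∀ d : ℕ, ∀ r1 r2 : Fin (n + 1), (r2 : ℕ) = (r1 : ℕ) + d + 1 →
        (∀ t : ℕ, (r1 : ℕ) < t → t ≤ (r2 : ℕ) → t ≠ (p : ℕ) ∧ t ≠ (p : ℕ) + 1) →
        linkPerm π r1 < linkPerm π r2 := by
      intro d
      induction d with
      | zero =>
        intro r1 r2 hval hcond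
        obtain ⟨h1, h2⟩ := hcond (r2 : ℕ) (by omega) le_rfl
        have := hstep (r2 : ℕ) r2.2 (by omega) h1 h2
        have e1 : (⟨(r2 : ℕ) - 1, by omega⟩ : Fin (n+1)) = r1 := by ext; simp; omega
        have e2 : (⟨(r2 : ℕ), r2.2⟩ : Fin (n+1)) = r2 := by ext; simp
        rwa [e1, e2] at this
      | succ d ih =>
        intro r1 r2 hval hcond
        have hr2 : (r2 : ℕ) < n + 1 := r2.2
        set r' : Fin (n + 1) := ⟨(r1 : ℕ) + d + 1, by omega⟩ with hr'
        have step1 : linkPerm π r1 < linkPerm π r' :=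
          ih r1 r' (by simp [hr']) (fun t ht1 ht2 => hcond t ht1 (by simp [hr'] at ht2; omega))
        have step2 : linkPerm π r' < linkPerm π r2 := by
          obtain ⟨h1, h2⟩ := hcond (r2 : ℕ) (by omega) le_rfl
          have := hstep (r2 : ℕ) r2.2 (by omega) h1 h2
          have e1 : (⟨(r2 : ℕ) - 1, by omega⟩ : Fin (n+1)) = r' := by
            ext; simp [hr']; omega
          have e2 : (⟨(r2 : ℕ), r2.2⟩ : Fin (n+1)) = r2 := by ext; simp
          rwa [e1, e2] at this
        exact step1.trans step2
    have hmonoA : ∀ r1 r2 : Fin (n + 1), r1 < r2 → r2 < p →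
        linkPerm π r1 < linkPerm π r2 := by
      intro r1 r2 h12 h2p
      rw [Fin.lt_def] at h12 h2p
      exact hchain ((r2 : ℕ) - (r1 : ℕ) - 1) r1 r2 (by omega)
        (fun t ht1 ht2 => by omega)
    have hmonoB : ∀ r1 r2 : Fin (n + 1), p < r1 → r1 < r2 →
        linkPerm π r1 < linkPerm π r2 := by
      intro r1 r2 hp1 h12
      rw [Fin.lt_def] at h12 hp1
      exact hchain ((r2 : ℕ) - (r1 : ℕ) - 1) r1 r2 (by omega)
        (fun t ht1 ht2 => by omega)
    -- main claim by induction on the length bound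
    have main : ∀ m : ℕ, ∀ i j : Fin (n + 1), n - (π i : ℕ) ≤ m → i < j →
        u.drop (π i : ℕ) < u.drop (π j : ℕ) := by
      intro m
      induction m with
      | zero =>
        intro i j hm hij
        have hpin : (π i : ℕ) = n := by have := (π i).2; omega
        have hip : i = p := by
          have : π i = Fin.last n := by ext; simpa using hpin
          rw [← hpp] at this; exact π.injective this
        have hjp : j ≠ p := by rw [← hip]; exact ne_of_gt hij
        have hjgt : p < j := hip ▸ hij
        rw [hip, hpp]
        simp only [Fin.val_last]
        rw [hdropn, hcons j hjp, if_neg (not_lt.mpr (le_of_lt hjgt))]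
        exact consLtCons13.2 (Or.inl hsb)
      | succ m ih =>
        intro i j hm hij
        by_cases hip : i = p
        · have hjp : j ≠ p := by rw [← hip]; exact ne_of_gt hij
          have hjgt : p < j := hip ▸ hij
          rw [hip, hpp]
          simp only [Fin.val_last]
          rw [hdropn, hcons j hjp, if_neg (not_lt.mpr (le_of_lt hjgt))]
          exact consLtCons13.2 (Or.inl hsb)
        by_cases hjp : j = p
        · have hilt : i < p := hjp ▸ hij
          rw [hjp, hpp]
          simp only [Fin.val_last]
          rw [hdropn, hcons i hip, if_pos hilt]
          exact consLtCons13.2 (Or.inl has)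
        · rcases lt_or_gt_of_ne hip with hi' | hi' <;>
            rcases lt_or_gt_of_ne hjp with hj' | hj'
          · -- both < p : heads both a
            rw [hcons i hip, hcons j hjp, if_pos hi', if_pos hj']
            refine consLtCons13.2 (Or.inr ⟨rfl, ?_⟩)
            rw [← htail i hip, ← htail j hjp]
            refine ih _ _ ?_ (hmonoA i j hij hj')
            have h1 : π (linkPerm π i) = π i + 1 := by
              rw [linkPerm_apply13]; exact π.apply_symm_apply _
            have h2 : ((π (linkPerm π i)) : ℕ) = (π i : ℕ) + 1 := by
              rw [h1]
              exact Fin.val_add_one_of_lt (by rw [Fin.lt_def, Fin.val_last]; exact hlt i hip)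
            rw [h2]; omega
          · -- i < p < j : heads a < b
            rw [hcons i hip, hcons j hjp, if_pos hi', if_neg (not_lt.mpr (le_of_lt hj'))]
            exact consLtCons13.2 (Or.inl (has.trans hsb))
          · exact absurd (hj'.trans hi') (lt_asymm hij)
          · -- both > p : heads both b
            rw [hcons i hip, hcons j hjp, if_neg (not_lt.mpr (le_of_lt hi')),
              if_neg (not_lt.mpr (le_of_lt hj'))]
            refine consLtCons13.2 (Or.inr ⟨rfl, ?_⟩)
            rw [← htail i hip, ← htail j hjp]
            refine ih _ _ ?_ (hmonoB i j hi' hij)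
            have h1 : π (linkPerm π i) = π i + 1 := by
              rw [linkPerm_apply13]; exact π.apply_symm_apply _
            have h2 : ((π (linkPerm π i)) : ℕ) = (π i : ℕ) + 1 := by
              rw [h1]
              exact Fin.val_add_one_of_lt (by rw [Fin.lt_def, Fin.val_last]; exact hlt i hip)
            rw [h2]; omega
    intro i j hij
    exact main n i j (by omega) hij
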